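/- The function Q̃(u) = u·e^{−u²/2} / ∫₀^u e^{−t²/2} dt is strictly decreasing on (0,∞), with lim_{u→0⁺} Q̃(u) = 1 and lim_{u→∞} Q̃(u) = 0. -/

import Mathlib

open Real Set Filter

/-- The function Q̃ of the paper. -/
noncomputable def Qtilde : ℝ → ℝ :=
  fun u => u * Real.exp (-u ^ 2 / 2) / ∫ t in (0:ℝ)..u, Real.exp (-t ^ 2 / 2)

noncomputable def F : ℝ → ℝ := fun u => ∫ t in (0:ℝ)..u, Real.exp (-t ^ 2 / 2)

lemma contInt : Continuous fun t : ℝ => Real.exp (-t ^ 2 / 2) := by continuity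

lemma hderivF (x : ℝ) : HasDerivAt F (Real.exp (-x ^ 2 / 2)) x :=
  intervalIntegral.integral_hasDerivAt_right (contInt.intervalIntegrable _ _)
    (contInt.stronglyMeasurableAtFilter _ _) contInt.continuousAt

lemma Fpos {x : ℝ} (hx : 0 < x) : 0 < F x :=
  intervalIntegral.intervalIntegral_pos_of_pos (contInt.intervalIntegrable _ _)
    (fun t => Real.exp_pos _) hx

lemma hderivN (x : ℝ) : HasDerivAt (fun u : ℝ => u * Real.exp (-u ^ 2 / 2))
    ((1 - x ^ 2) * Real.exp (-x ^ 2 / 2)) x := by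
  have h1 : HasDerivAt (fun u : ℝ => -u ^ 2 / 2) (-x) x := by
    have := ((hasDerivAt_pow 2 x).neg).div_const 2
    simpa using this.congr_deriv (by ring)
  have h2 := (Real.hasDerivAt_exp _).comp x h1
  have h3 := (hasDerivAt_id x).mul h2
  simp only [Function.comp, id] at h3
  exact h3.congr_deriv (by ring)


lemma hderivg (x : ℝ) : HasDerivAt
    (fun u : ℝ => u * Real.exp (-u ^ 2 / 2) - (1 - u ^ 2) * F u) (2 * x * F x) x := by
  have h1 : HasDerivAt (fun u : ℝ => (1 - u ^ 2)) (-(2 * x)) x := by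
    have := ((hasDerivAt_pow 2 x).const_sub 1)
    simpa using this
  have h2 := h1.mul (hderivF x)
  have h3 := (hderivN x).sub h2
  exact h3.congr_deriv (by ring)

lemma F0 : F 0 = 0 := intervalIntegral.integral_same

lemma contF : Continuous F := continuous_iff_continuousAt.mpr fun x => (hderivF x).continuousAt

lemma glemma {x : ℝ} (hx : 0 < x) : (1 - x ^ 2) * F x < x * Real.exp (-x ^ 2 / 2) := by
  set g : ℝ → ℝ := fun u => u * Real.exp (-u ^ 2 / 2) - (1 - u ^ 2) * F u with hg
  have hmono : StrictMonoOn g (Ici 0) := by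
    apply strictMonoOn_of_deriv_pos (convex_Ici 0)
    · exact fun x _ => ((hderivg x).continuousAt).continuousWithinAt
    · intro x hx
      rw [interior_Ici] at hx
      rw [(hderivg x).deriv]
      exact mul_pos (by have := mem_Ioi.mp hx; linarith) (Fpos hx)
  have := hmono (self_mem_Ici) (le_of_lt hx) hx
  simp [hg, F0] at this
  linarith

lemma Fmono : StrictMono F :=
  strictMono_of_deriv_pos fun x => by rw [(hderivF x).deriv]; exact Real.exp_pos _

lemma QtildeF (u : ℝ) : Qtilde u = u * Real.exp (-u ^ 2 / 2) / F u := rfl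

lemma hderivQ {x : ℝ} (hx : 0 < x) : HasDerivAt Qtilde
    (((1 - x ^ 2) * Real.exp (-x ^ 2 / 2) * F x -
      x * Real.exp (-x ^ 2 / 2) * Real.exp (-x ^ 2 / 2)) / (F x) ^ 2) x :=
  (hderivN x).div (hderivF x) (Fpos hx).ne'

lemma anti : StrictAntiOn Qtilde (Ioi (0:ℝ)) := by
  apply strictAntiOn_of_deriv_neg (convex_Ioi 0)
  · exact fun x hx => ((hderivQ hx).continuousAt).continuousWithinAt
  · intro x hx
    rw [interior_Ioi] at hx
    rw [(hderivQ hx).deriv]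
    apply div_neg_of_neg_of_pos
    · have h := mul_lt_mul_of_pos_right (glemma hx) (Real.exp_pos (-x ^ 2 / 2))
      nlinarith
    · exact pow_pos (Fpos hx) 2

lemma lim0 : Tendsto Qtilde (nhdsWithin 0 (Ioi 0)) (nhds 1) := by
  have hs : Tendsto (fun u => F u / u) (nhdsWithin 0 (Ioi 0)) (nhds 1) := by
    have h := hasDerivAt_iff_tendsto_slope.mp (hderivF 0)
    have h1 : Real.exp (-(0:ℝ) ^ 2 / 2) = 1 := by norm_num
    rw [h1] at h
    have h' : Tendsto (slope F 0) (nhdsWithin 0 (Ioi 0)) (nhds 1) :=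
      h.mono_left (nhdsWithin_mono 0 fun x hx => ne_of_gt hx)
    refine Tendsto.congr' ?_ h'
    filter_upwards [self_mem_nhdsWithin] with u hu
    simp [slope_def_field, F0]
  have hexp : Tendsto (fun u : ℝ => Real.exp (-u ^ 2 / 2)) (nhdsWithin 0 (Ioi 0)) (nhds 1) := by
    have hc : ContinuousAt (fun u : ℝ => Real.exp (-u ^ 2 / 2)) 0 := by fun_prop
    have := hc.continuousWithinAt (s := Ioi 0)
    simpa [ContinuousWithinAt] using this
  have hdiv := hexp.div hs one_ne_zero
  rw [div_one] at hdiv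
  refine Tendsto.congr' ?_ hdiv
  filter_upwards [self_mem_nhdsWithin] with u hu
  have hu0 : u ≠ 0 := ne_of_gt hu
  have hF : F u ≠ 0 := (Fpos hu).ne'
  rw [QtildeF]
  simp only [Pi.div_apply]
  rw [div_div_eq_mul_div]
  ring

lemma limtop : Tendsto Qtilde atTop (nhds 0) := by
  have hN : Tendsto (fun u : ℝ => u * Real.exp (-u ^ 2 / 2)) atTop (nhds 0) := by
    have h1 : Tendsto (fun u : ℝ => u * Real.exp (-u)) atTop (nhds 0) := by
      simpa using Real.tendsto_pow_mul_exp_neg_atTop_nhds_zero 1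
    apply tendsto_of_tendsto_of_tendsto_of_le_of_le' tendsto_const_nhds h1
    · filter_upwards [eventually_ge_atTop (0:ℝ)] with u hu
      exact mul_nonneg hu (Real.exp_pos _).le
    · filter_upwards [eventually_ge_atTop (2:ℝ)] with u hu
      have h2 : -u ^ 2 / 2 ≤ -u := by nlinarith
      exact mul_le_mul_of_nonneg_left (Real.exp_le_exp.mpr h2) (by linarith)
  have hb := hN.div_const (F 1)
  rw [zero_div] at hb
  apply tendsto_of_tendsto_of_tendsto_of_le_of_le' tendsto_const_nhds hb
  · filter_upwards [eventually_ge_atTop (1:ℝ)] with u hu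
    have hFu := Fpos (show (0:ℝ) < u by linarith)
    exact div_nonneg (mul_nonneg (by linarith) (Real.exp_pos _).le) hFu.le
  · filter_upwards [eventually_ge_atTop (1:ℝ)] with u hu
    have hF1 : F 1 ≤ F u := Fmono.monotone hu
    exact div_le_div_of_nonneg_left (mul_nonneg (by linarith) (Real.exp_pos _).le)
      (Fpos one_pos) hF1

/-- Q̃ is strictly decreasing on (0,∞), tends to 1 at 0⁺ and to 0 at ∞. -/
theorem Qtilde_properties :
    StrictAntiOn Qtilde (Ioi (0:ℝ)) ∧
      Tendsto Qtilde (nhdsWithin 0 (Ioi 0)) (nhds 1) ∧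
      Tendsto Qtilde atTop (nhds 0) :=
  ⟨anti, lim0, limtop⟩
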